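/- If a finite metric space (X,d) admits a (τ,ρ,k,δ)-ultrametric cover, where ρ ≥ 1, k ≥ 1, δ ≥ 1, then it admits a (τ·⌈δ/2⌉, ρ/k)-LSO. -/
import Mathlib


open scoped BigOperators

open scoped BigOperators

/-- `du` is an ultrametric distance function on `X`: a metric satisfying the
strong triangle inequality. -/
def UltrametricOn {X : Type*} (du : X → X → ℝ) : Prop :=
  (∀ x, du x x = 0) ∧ (∀ x y : X, x ≠ y → 0 < du x y) ∧
    (∀ x y : X, du x y = du y x) ∧
    ∀ x y z : X, du x z ≤ max (du x y) (du y z)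

/-- The ultrametric `du` is a `k`-HST: distinct positive distance values are
separated by a factor of `k`. -/
def IsHST {X : Type*} (du : X → X → ℝ) (k : ℝ) : Prop :=
  ∀ x y z : X, 0 < du x y → du x y < du x z → k * du x y ≤ du x z

/-- The tree of the ultrametric `du` has degree at most `δ`: for every `x` and
`r > 0`, the closed ball `{y : du x y ≤ r}` meets at most `δ` equivalence
classes of the relation `du (·,·) < r`. -/
def HSTDegreeLE {X : Type*} (du : X → X → ℝ) (δ : ℝ) : Prop :=
  ∀ (x : X) (r : ℝ), 0 < r → ∃ S : Finset X, (S.card : ℝ) ≤ δ ∧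
    ∀ y : X, du x y ≤ r → ∃ z ∈ S, du y z < r

/-- `(τ, ρ, k, δ)`-ultrametric cover: a `(τ,ρ)`-ultrametric cover in which every
ultrametric is a `k`-HST whose tree has degree at most `δ`. -/
def IsHSTUltrametricCover (X : Type*) [MetricSpace X] (τ ρ k δ : ℝ) : Prop :=
  ∃ s : ℕ, (s : ℝ) ≤ τ ∧ ∃ D : Fin s → X → X → ℝ,
    (∀ i, UltrametricOn (D i)) ∧
    (∀ (i : Fin s) (x y : X), dist x y ≤ D i x y) ∧
    (∀ x y : X, ∃ i, D i x y ≤ ρ * dist x y) ∧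
    (∀ i, IsHST (D i) k) ∧
    ∀ i, HSTDegreeLE (D i) δ

/-- `X` has doubling dimension at most `d`: every ball of radius `2r` can be
covered by at most `2^d` balls of radius `r`. -/
def DoublingDimLE (X : Type*) [MetricSpace X] (d : ℝ) : Prop :=
  ∀ (x : X) (r : ℝ), 0 < r → ∃ S : Finset X, (S.card : ℝ) ≤ (2 : ℝ) ^ d ∧
    ∀ y : X, dist x y ≤ 2 * r → ∃ z ∈ S, dist y z ≤ r

/-- The ordering `σ` serves the pair `(x,y)` with stretch `ρ` (w.r.t. the
distance function `d`): `x ≺_σ y` and the points strictly between `x` and `y`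
in `σ` split (at threshold `t`) into a prefix interval contained in
`B(x, ρ·d(x,y))` and a suffix interval contained in `B(y, ρ·d(x,y))`. -/
def LSOPair {X : Type*} (d : X → X → ℝ) (σ : X → ℝ) (ρ : ℝ) (x y : X) : Prop :=
  σ x < σ y ∧ ∃ t : ℝ, ∀ z : X, σ x < σ z → σ z < σ y →
    (σ z < t → d x z ≤ ρ * d x y) ∧ (t ≤ σ z → d y z ≤ ρ * d x y)

/-- `(τ,ρ)`-LSO for `X` with distance function `d`: at most `τ` linear
orderings of `X` (each given by an injective real-valued function), such that
every pair is served by some ordering, possibly after swapping roles. -/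
def IsLSO {X : Type*} (d : X → X → ℝ) (τ ρ : ℝ) : Prop :=
  ∃ s : ℕ, (s : ℝ) ≤ τ ∧ ∃ σ : Fin s → X → ℝ,
    (∀ i, Function.Injective (σ i)) ∧
    ∀ x y : X, x ≠ y → ∃ i, LSOPair d (σ i) ρ x y ∨ LSOPair d (σ i) ρ y x

/-- If a finite metric space admits a `(τ,ρ,k,δ)`-ultrametric cover (with
`ρ,k,δ ≥ 1`), then it admits a `(τ·⌈δ/2⌉, ρ/k)`-LSO. -/

def zq (m j : ℕ) (a : ZMod (2*m)) : ℕ :=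
  if (a - (j : ZMod (2*m))).val = 0 then 0
  else if (a - (j : ZMod (2*m))).val ≤ m then 2 * (a - (j : ZMod (2*m))).val - 1
  else 2 * (2*m - (a - (j : ZMod (2*m))).val)

lemma zq_lt (m j : ℕ) (hm : 1 ≤ m) (a : ZMod (2*m)) : zq m j a < 2*m := by
  haveI : NeZero (2*m) := ⟨by omega⟩
  have hv : (a - (j : ZMod (2*m))).val < 2*m := ZMod.val_lt _
  unfold zq; split_ifs <;> first | omega | contradiction

lemma zq_inj (m j : ℕ) (hm : 1 ≤ m) : Function.Injective (zq m j) := by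
  intro a b h
  haveI : NeZero (2*m) := ⟨by omega⟩
  have ha : (a - (j : ZMod (2*m))).val < 2*m := ZMod.val_lt _
  have hb : (b - (j : ZMod (2*m))).val < 2*m := ZMod.val_lt _
  have hv : (a - (j : ZMod (2*m))).val = (b - (j : ZMod (2*m))).val := by
    unfold zq at h; split_ifs at h <;> omega
  have h2 : a - (j : ZMod (2*m)) = b - (j : ZMod (2*m)) := ZMod.val_injective _ hv
  have := congrArg (· + (j : ZMod (2*m))) h2
  simpa using this

lemma cast_zmod_sub (m v : ℕ) (hv : v ≤ 2*m) :
    ((2*m - v : ℕ) : ZMod (2*m)) = -((v : ℕ) : ZMod (2*m)) := by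
  have : ((2*m - v : ℕ) : ZMod (2*m)) = ((2*m : ℕ) : ZMod (2*m)) - v := by
    push_cast [Nat.cast_sub hv]; ring
  rw [this, ZMod.natCast_self]; ring

lemma zq_adj (m : ℕ) (hm : 1 ≤ m) (a b : ZMod (2*m)) (hab : a ≠ b) :
    ∃ j : ℕ, j < m ∧ (zq m j a + 1 = zq m j b ∨ zq m j b + 1 = zq m j a) := by
  haveI : NeZero (2*m) := ⟨by omega⟩
  set s := (a + b).val with hs
  have hslt : s < 2*m := ZMod.val_lt _
  refine ⟨s / 2, by omega, ?_⟩
  set j := s / 2 with hj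
  set u := a - (j : ZMod (2*m)) with hu
  set w := b - (j : ZMod (2*m)) with hw
  have hcast : ((s : ℕ) : ZMod (2*m)) = a + b := ZMod.natCast_rightInverse _
  have hsum : u + w = ((s : ℕ) : ZMod (2*m)) - ((2*j : ℕ) : ZMod (2*m)) := by
    rw [hcast, hu, hw]; push_cast; ring
  set v := u.val with hv
  have hvlt : v < 2*m := ZMod.val_lt _
  have hucast : ((v : ℕ) : ZMod (2*m)) = u := ZMod.natCast_rightInverse _
  have huw : u ≠ w := by
    intro h; apply hab
    have := congrArg (· + (j : ZMod (2*m))) (hu ▸ hw ▸ h)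
    simpa using this
  rcases Nat.even_or_odd s with he | ho
  · -- even case: s = 2*j, w = -u
    have hs2 : s = 2*j := by rw [Nat.even_iff] at he; omega
    have h0 : u + w = 0 := by rw [hsum, ← hs2]; ring
    have hwu : w = -u := by linear_combination h0
    have hv0 : v ≠ 0 := by
      intro h0'
      have : u = 0 := by rwa [ZMod.val_eq_zero] at h0'
      exact huw (by rw [hwu, this, neg_zero])
    have hwcast : w = ((2*m - v : ℕ) : ZMod (2*m)) := by
      rw [cast_zmod_sub m v (le_of_lt hvlt), hucast, hwu]
    have hwval : w.val = 2*m - v := by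
      rw [hwcast]; exact ZMod.val_cast_of_lt (by omega)
    have hvm : v ≠ m := by
      intro hvm
      apply huw
      apply ZMod.val_injective
      rw [hwval, ← hv, hvm]; omega
    unfold zq
    rw [← hu, ← hw, ← hv, hwval]
    split_ifs <;> first | omega | contradiction
  · -- odd case: s = 2*j+1, w = 1 - u
    have hs2 : s = 2*j + 1 := by rw [Nat.odd_iff] at ho; omega
    have h1 : u + w = 1 := by rw [hsum, hs2]; push_cast; ring
    have hwu : w = 1 - u := by linear_combination h1
    rcases Nat.lt_or_ge v 2 with hv2 | hv2
    · have hv01 : v = 0 ∨ v = 1 := by omega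
      rcases hv01 with hv0 | hv1
      · -- v = 0 : u = 0, w = 1
        have hu0 : u = 0 := by rw [← hucast, hv0]; norm_num
        have hwcast : w = ((1 : ℕ) : ZMod (2*m)) := by rw [hwu, hu0]; norm_num
        have hwval : w.val = 1 := by rw [hwcast]; exact ZMod.val_cast_of_lt (by omega)
        unfold zq
        rw [← hu, ← hw, ← hv, hwval, hv0]
        split_ifs <;> first | omega | contradiction
      · -- v = 1 : u = 1, w = 0
        have hu1 : u = ((1 : ℕ) : ZMod (2*m)) := by rw [← hucast, hv1]
        have hwcast : w = 0 := by rw [hwu, hu1]; push_cast; ring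
        have hwval : w.val = 0 := by rw [hwcast, ZMod.val_zero]
        unfold zq
        rw [← hu, ← hw, ← hv, hwval, hv1]
        split_ifs <;> first | omega | contradiction
    · have hwcast : w = ((2*m + 1 - v : ℕ) : ZMod (2*m)) := by
        have h1c : ((2*m + 1 - v : ℕ) : ZMod (2*m)) = 1 - ((v:ℕ) : ZMod (2*m)) := by
          rw [Nat.cast_sub (by omega : v ≤ 2*m+1), Nat.cast_add, Nat.cast_one,
            ZMod.natCast_self]
          ring
        rw [h1c, hucast, hwu]
      have hwval : w.val = 2*m + 1 - v := by
        rw [hwcast]; exact ZMod.val_cast_of_lt (by omega)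
      unfold zq
      rw [← hu, ← hw, ← hv, hwval]
      split_ifs <;> first | omega | contradiction

/-- `σ` serves the pair `(x,y)` inside `A` w.r.t. `du`, with a strict conclusion. -/
def GoodOn {X : Type} (A : Finset X) (du : X → X → ℝ) (σ : X → ℝ) (x y : X) : Prop :=
  σ x < σ y ∧ ∃ t : ℝ, ∀ z ∈ A, σ x < σ z → σ z < σ y →
    (σ z < t → du x z < du x y) ∧ (t ≤ σ z → du y z < du x y)

lemma nat_sandwich {p q : ℕ} {x : ℝ} (h1 : (p:ℝ) ≤ x) (h2 : x < (p:ℝ) + 1)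
    (h3 : (q:ℝ) ≤ x) (h4 : x < (q:ℝ) + 1) : p = q := by
  have hpq : (p:ℝ) < (q:ℝ) + 1 := lt_of_le_of_lt h1 h4
  have hqp : (q:ℝ) < (p:ℝ) + 1 := lt_of_le_of_lt h3 h2
  have : p < q + 1 := by exact_mod_cast hpq
  have : q < p + 1 := by exact_mod_cast hqp
  omega

lemma orders_small {X : Type} (du : X → X → ℝ) (m : ℕ) (A : Finset X) (h : A.card ≤ 1) :
    ∃ σ : Fin m → X → ℝ,
      (∀ j, ∀ x ∈ A, 0 ≤ σ j x ∧ σ j x < 1) ∧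
      (∀ j, Set.InjOn (σ j) ↑A) ∧
      (∀ x ∈ A, ∀ y ∈ A, x ≠ y →
        ∃ j, GoodOn A du (σ j) x y ∨ GoodOn A du (σ j) y x) := by
  refine ⟨fun _ _ => 0, fun j x _ => ⟨le_refl 0, one_pos⟩, ?_, ?_⟩
  · intro j x hx y hy _
    exact Finset.card_le_one.mp h x (Finset.mem_coe.mp hx) y (Finset.mem_coe.mp hy)
  · intro x hx y hy hxy
    exact absurd (Finset.card_le_one.mp h x hx y hy) hxy

lemma exists_orders {X : Type} [DecidableEq X] (du : X → X → ℝ) (hu : UltrametricOn du)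
    (δ : ℝ) (hdeg : HSTDegreeLE du δ) (m : ℕ) (hm : 1 ≤ m) (hδm : δ ≤ 2*(m:ℝ)) :
    ∀ (N : ℕ) (A : Finset X), A.card ≤ N →
    ∃ σ : Fin m → X → ℝ,
      (∀ j, ∀ x ∈ A, 0 ≤ σ j x ∧ σ j x < 1) ∧
      (∀ j, Set.InjOn (σ j) ↑A) ∧
      (∀ x ∈ A, ∀ y ∈ A, x ≠ y →
        ∃ j, GoodOn A du (σ j) x y ∨ GoodOn A du (σ j) y x) := by
  intro N
  induction N with
  | zero => exact fun A hA => orders_small du m A (by omega)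
  | succ N ih =>
    intro A hA
    by_cases hA1 : A.card ≤ 1
    · exact orders_small du m A hA1
    push_neg at hA1
    haveI : NeZero (2*m) := ⟨by omega⟩
    obtain ⟨hxx, hupos, husymm, hultra⟩ := hu
    -- the maximal distance R
    have hAne : A.Nonempty := Finset.card_pos.mp (by omega)
    have hPne : (A ×ˢ A).Nonempty := hAne.product hAne
    set R := (A ×ˢ A).sup' hPne (fun p => du p.1 p.2) with hR
    have hRle : ∀ x ∈ A, ∀ y ∈ A, du x y ≤ R := by
      intro x hx y hy
      have hxy : (x, y) ∈ A ×ˢ A := Finset.mem_product.mpr ⟨hx, hy⟩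
      exact Finset.le_sup' (fun p => du p.1 p.2) hxy
    obtain ⟨⟨x1, y1⟩, hp1, hRval⟩ := Finset.exists_mem_eq_sup' hPne (fun p => du p.1 p.2)
    obtain ⟨hx1, hy1⟩ := Finset.mem_product.mp hp1
    have hR0 : 0 < R := by
      obtain ⟨u, hub, v, hvb, huv⟩ := Finset.one_lt_card.mp hA1
      exact lt_of_lt_of_le (hupos u v huv) (hRle u hub v hvb)
    -- equivalence classes
    set C : X → Finset X := fun y => A.filter (fun z => du y z < R) with hC
    have hmemC : ∀ y ∈ A, y ∈ C y := by
      intro y hy; simp only [hC, Finset.mem_filter]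
      exact ⟨hy, by rw [hxx]; exact hR0⟩
    have hCsubA : ∀ y, C y ⊆ A := fun y => Finset.filter_subset _ _
    have hCeq : ∀ x ∈ A, ∀ y : X, du x y < R → C x = C y := by
      intro x hx y hxy
      ext z
      simp only [hC, Finset.mem_filter, and_congr_right_iff]
      intro hz
      constructor
      · intro h
        calc du y z ≤ max (du y x) (du x z) := hultra y x z
          _ < R := max_lt (by rwa [← husymm]) h
      · intro h
        calc du x z ≤ max (du x y) (du y z) := hultra x y z
          _ < R := max_lt hxy h
    have hCmemdu : ∀ x ∈ A, ∀ z ∈ C x, du x z < R := by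
      intro x _ z hz
      exact (Finset.mem_filter.mp hz).2
    have hCne : ∀ x ∈ A, ∀ y ∈ A, C x = C y → du x y < R := by
      intro x hx y hy h
      exact hCmemdu x hx y (h ▸ hmemC y hy)
    -- the set of classes and its cardinality
    set T : Finset (Finset X) := A.image C with hT
    have hCmemT : ∀ x ∈ A, C x ∈ T := fun x hx => Finset.mem_image_of_mem C hx
    obtain ⟨x0, hx0⟩ := hAne
    obtain ⟨S, hScard, hSc⟩ := hdeg x0 R hR0
    have hTex : ∀ B ∈ T, ∃ z ∈ S, ∃ y ∈ A, B = C y ∧ du y z < R := by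
      intro B hB
      obtain ⟨y, hy, hBy⟩ := Finset.mem_image.mp hB
      obtain ⟨z, hzS, hz⟩ := hSc y (hRle x0 hx0 y hy)
      exact ⟨z, hzS, y, hy, hBy.symm, hz⟩
    set f : Finset X → X := fun B =>
      if h : ∃ z ∈ S, ∃ y ∈ A, B = C y ∧ du y z < R then h.choose else x0 with hf
    have hfS : ∀ B ∈ T, f B ∈ S := by
      intro B hB
      have h := hTex B hB
      simp only [hf, dif_pos h]
      exact h.choose_spec.1
    have hfspec : ∀ B ∈ T, ∃ y ∈ A, B = C y ∧ du y (f B) < R := by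
      intro B hB
      have h := hTex B hB
      simp only [hf, dif_pos h]
      exact h.choose_spec.2
    have hTcard : T.card ≤ S.card := by
      apply Finset.card_le_card_of_injOn f hfS
      intro B1 hB1 B2 hB2 hfeq
      obtain ⟨y1', hy1', hB1e, hd1⟩ := hfspec B1 (Finset.mem_coe.mp hB1)
      obtain ⟨y2', hy2', hB2e, hd2⟩ := hfspec B2 (Finset.mem_coe.mp hB2)
      rw [hfeq] at hd1
      have : du y1' y2' < R :=
        lt_of_le_of_lt (hultra y1' (f B2) y2')
          (max_lt hd1 (by rw [husymm]; exact hd2))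
      rw [hB1e, hB2e]
      exact hCeq y1' hy1' y2' this
    have hc2m : T.card ≤ 2*m := by
      have h1 : (T.card : ℝ) ≤ δ := le_trans (Nat.cast_le.mpr hTcard) hScard
      have h2 : (T.card : ℝ) ≤ 2*(m:ℝ) := le_trans h1 hδm
      exact_mod_cast h2
    -- index of each class in ZMod (2*m)
    set aidx : X → ZMod (2*m) := fun x =>
      if hx : C x ∈ T then (((T.equivFin ⟨C x, hx⟩ : Fin T.card) : ℕ) : ZMod (2*m))
      else 0 with haidx
    have hfin_cast_inj : ∀ i i' : Fin T.card,
        ((i : ℕ) : ZMod (2*m)) = (((i' : ℕ)) : ZMod (2*m)) → i = i' := by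
      intro i i' h
      have h1 : ((i : ℕ) : ZMod (2*m)).val = (i : ℕ) :=
        ZMod.val_cast_of_lt (lt_of_lt_of_le i.is_lt hc2m)
      have h2 : (((i' : ℕ)) : ZMod (2*m)).val = (i' : ℕ) :=
        ZMod.val_cast_of_lt (lt_of_lt_of_le i'.is_lt hc2m)
      apply Fin.ext
      rw [← h1, ← h2, h]
    have haidx_inj : ∀ x ∈ A, ∀ y ∈ A, aidx x = aidx y → C x = C y := by
      intro x hx y hy h
      simp only [haidx, dif_pos (hCmemT x hx), dif_pos (hCmemT y hy)] at h
      have := T.equivFin.injective (hfin_cast_inj _ _ h)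
      exact congrArg Subtype.val this
    have haidx_eq : ∀ x y : X, C x = C y → aidx x = aidx y := by
      intro x y h
      simp only [haidx, h]
    -- recursion for each class
    have hclt : ∀ B ∈ T, B.card ≤ N := by
      intro B hB
      obtain ⟨y, hy, hBe⟩ := Finset.mem_image.mp hB
      have hnot : ¬ (x1 ∈ C y ∧ y1 ∈ C y) := by
        rintro ⟨h1, h2⟩
        have hd1 : du x1 y < R := by
          rw [husymm]; exact hCmemdu y hy x1 h1
        have hd2 : du y y1 < R := hCmemdu y hy y1 h2
        have : du x1 y1 < R := lt_of_le_of_lt (hultra x1 y y1) (max_lt hd1 hd2)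
        rw [← hRval] at this
        exact lt_irrefl _ this
      have hss : C y ⊂ A := by
        refine ⟨hCsubA y, fun hsub => ?_⟩
        exact hnot ⟨hsub hx1, hsub hy1⟩
      have := Finset.card_lt_card hss
      rw [← hBe]
      omega
    have hrec : ∀ B : Finset X, ∃ σB : Fin m → X → ℝ, B ∈ T →
        ((∀ j, ∀ x ∈ B, 0 ≤ σB j x ∧ σB j x < 1) ∧
         (∀ j, Set.InjOn (σB j) ↑B) ∧
         (∀ x ∈ B, ∀ y ∈ B, x ≠ y →
            ∃ j, GoodOn B du (σB j) x y ∨ GoodOn B du (σB j) y x)) := by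
      intro B
      by_cases hB : B ∈ T
      · obtain ⟨σB, h1, h2, h3⟩ := ih B (hclt B hB)
        exact ⟨σB, fun _ => ⟨h1, h2, h3⟩⟩
      · exact ⟨fun _ _ => 0, fun h => absurd h hB⟩
    choose sg hsg using hrec
    -- global (unscaled) order functions
    set ql : Fin m → X → ℕ := fun j x => zq m (j : ℕ) (aidx x) with hql
    set τ : Fin m → X → ℝ := fun j x => ((ql j x : ℕ) : ℝ) + sg (C x) j x with hτ
    have hqlt : ∀ (j : Fin m) (x : X), ql j x < 2*m := fun j x => zq_lt m j hm _
    have hsgx : ∀ (j : Fin m), ∀ x ∈ A, 0 ≤ sg (C x) j x ∧ sg (C x) j x < 1 :=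
      fun j x hx => (hsg (C x) (hCmemT x hx)).1 j x (hmemC x hx)
    have hτlb : ∀ (j : Fin m), ∀ x ∈ A, ((ql j x : ℕ) : ℝ) ≤ τ j x := by
      intro j x hx
      have := (hsgx j x hx).1
      simp only [hτ]; linarith
    have hτub : ∀ (j : Fin m), ∀ x ∈ A, τ j x < ((ql j x : ℕ) : ℝ) + 1 := by
      intro j x hx
      have := (hsgx j x hx).2
      simp only [hτ]; linarith
    have hclass : ∀ (j : Fin m), ∀ x ∈ A, ∀ z ∈ A,
        ((ql j x : ℕ) : ℝ) ≤ τ j z → τ j z < ((ql j x : ℕ) : ℝ) + 1 → C z = C x := by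
      intro j x hx z hz h1 h2
      have hq : ql j z = ql j x := nat_sandwich (hτlb j z hz) (hτub j z hz) h1 h2
      exact haidx_inj z hz x hx (zq_inj m (j : ℕ) hm hq)
    have hqeqC : ∀ (j : Fin m) (x y : X), C x = C y → ql j x = ql j y := by
      intro j x y h
      simp only [hql, haidx_eq x y h]
    -- injectivity of τ
    have hτinj : ∀ j : Fin m, Set.InjOn (τ j) ↑A := by
      intro j x hx y hy h
      have hx' := Finset.mem_coe.mp hx
      have hy' := Finset.mem_coe.mp hy
      have hcxy : C x = C y := by
        apply hclass j y hy' x hx'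
        · rw [h]; exact hτlb j y hy'
        · rw [h]; exact hτub j y hy'
      have hq : ql j x = ql j y := hqeqC j x y hcxy
      have hsgeq : sg (C x) j x = sg (C x) j y := by
        have hτx : τ j x = ((ql j x : ℕ) : ℝ) + sg (C x) j x := rfl
        have hτy : τ j y = ((ql j y : ℕ) : ℝ) + sg (C y) j y := rfl
        have e3 : sg (C y) j y = sg (C x) j y := by rw [hcxy]
        have hq' : ((ql j x : ℕ) : ℝ) = ((ql j y : ℕ) : ℝ) := by exact_mod_cast hq
        linarith
      exact (hsg (C x) (hCmemT x hx')).2.1 j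
        (Finset.mem_coe.mpr (hmemC x hx'))
        (Finset.mem_coe.mpr (hcxy ▸ hmemC y hy')) hsgeq
    -- lifting goodness within a class
    have hlift : ∀ (j : Fin m), ∀ x ∈ A, ∀ y ∈ A, C x = C y →
        GoodOn (C x) du (sg (C x) j) x y → GoodOn A du (τ j) x y := by
      intro j x hx y hy hcxy hG
      obtain ⟨hlt, t, ht⟩ := hG
      have hq : ql j x = ql j y := hqeqC j x y hcxy
      have hτx : τ j x = ((ql j x : ℕ) : ℝ) + sg (C x) j x := rfl
      have hτy : τ j y = ((ql j x : ℕ) : ℝ) + sg (C x) j y := by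
        simp only [hτ, ← hcxy, ← hq]
      constructor
      · rw [hτx, hτy]; linarith
      · refine ⟨((ql j x : ℕ) : ℝ) + t, ?_⟩
        intro z hz h1 h2
        have hzc : C z = C x := by
          apply hclass j x hx z hz
          · exact le_trans (hτlb j x hx) (le_of_lt h1)
          · calc τ j z < τ j y := h2
              _ < ((ql j x : ℕ) : ℝ) + 1 := by
                  rw [hτy]; have := (hsgx j y hy).2; rw [← hcxy] at this; linarith
        have hzB : z ∈ C x := hzc ▸ hmemC z hz
        have hτz : τ j z = ((ql j x : ℕ) : ℝ) + sg (C x) j z := by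
          simp only [hτ, hzc, hqeqC j z x hzc]
        rw [hτx] at h1
        rw [hτy] at h2
        rw [hτz] at h1 h2 ⊢
        have := ht z hzB (by linarith) (by linarith)
        exact ⟨fun hh => this.1 (by linarith), fun hh => this.2 (by linarith)⟩
    -- cross-class goodness
    have hcross : ∀ (j : Fin m), ∀ x ∈ A, ∀ y ∈ A, C x ≠ C y →
        ql j x + 1 = ql j y → GoodOn A du (τ j) x y := by
      intro j x hx y hy hne hq1
      have hdxy : du x y = R := by
        rcases lt_or_eq_of_le (hRle x hx y hy) with h | h
        · exact absurd (hCeq x hx y h) hne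
        · exact h
      have hq1' : ((ql j x : ℕ) : ℝ) + 1 = ((ql j y : ℕ) : ℝ) := by exact_mod_cast hq1
      constructor
      · have h1 := hτub j x hx
        have h2 := hτlb j y hy
        linarith
      · refine ⟨((ql j y : ℕ) : ℝ), ?_⟩
        intro z hz h1 h2
        constructor
        · intro hzt
          have hzc : C z = C x := by
            apply hclass j x hx z hz
            · exact le_trans (hτlb j x hx) (le_of_lt h1)
            · linarith
          have : du x z < R := hCmemdu x hx z (hzc ▸ hmemC z hz)
          rwa [hdxy]
        · intro hzt
          have hzc : C z = C y := by
            apply hclass j y hy z hz hzt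
            calc τ j z < τ j y := h2
              _ < ((ql j y : ℕ) : ℝ) + 1 := hτub j y hy
          have : du y z < R := hCmemdu y hy z (hzc ▸ hmemC z hz)
          rwa [hdxy]
    -- all pairs are served by some τ j
    have hτgood : ∀ x ∈ A, ∀ y ∈ A, x ≠ y →
        ∃ j, GoodOn A du (τ j) x y ∨ GoodOn A du (τ j) y x := by
      intro x hx y hy hxy
      by_cases hcxy : C x = C y
      · obtain ⟨j, h | h⟩ := (hsg (C x) (hCmemT x hx)).2.2 x (hmemC x hx)
          y (hcxy ▸ hmemC y hy) hxy
        · exact ⟨j, Or.inl (hlift j x hx y hy hcxy h)⟩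
        · refine ⟨j, Or.inr (hlift j y hy x hx hcxy.symm ?_)⟩
          rw [← hcxy]; exact h
      · have hane : aidx x ≠ aidx y := fun h => hcxy (haidx_inj x hx y hy h)
        obtain ⟨j0, hj0, h | h⟩ := zq_adj m hm (aidx x) (aidx y) hane
        · exact ⟨⟨j0, hj0⟩, Or.inl (hcross ⟨j0, hj0⟩ x hx y hy hcxy h)⟩
        · exact ⟨⟨j0, hj0⟩, Or.inr (hcross ⟨j0, hj0⟩ y hy x hx (Ne.symm hcxy) h)⟩
    -- rescale into [0,1)
    have hpos : (0:ℝ) < 2*m := by positivity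
    have hτnn : ∀ (j : Fin m), ∀ x ∈ A, 0 ≤ τ j x := by
      intro j x hx
      have := hτlb j x hx
      have h0 : (0:ℝ) ≤ ((ql j x : ℕ) : ℝ) := Nat.cast_nonneg _
      linarith
    have hτbd : ∀ (j : Fin m), ∀ x ∈ A, τ j x < 2*m := by
      intro j x hx
      have h1 := hτub j x hx
      have h2 : ((ql j x : ℕ) : ℝ) + 1 ≤ 2*(m:ℝ) := by
        have := hqlt j x
        have : (ql j x : ℝ) + 1 ≤ ((2*m : ℕ) : ℝ) := by exact_mod_cast this
        simpa using this
      linarith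
    have hscale : ∀ (j : Fin m) (x y : X), GoodOn A du (τ j) x y →
        GoodOn A du (fun w => τ j w / (2*m : ℝ)) x y := by
      intro j x y hG
      obtain ⟨hlt, t, ht⟩ := hG
      refine ⟨(div_lt_div_iff_of_pos_right hpos).mpr hlt, t / (2*m : ℝ), ?_⟩
      intro z hz h1 h2
      have h1' := (div_lt_div_iff_of_pos_right hpos).mp h1
      have h2' := (div_lt_div_iff_of_pos_right hpos).mp h2
      have := ht z hz h1' h2'
      exact ⟨fun hh => this.1 ((div_lt_div_iff_of_pos_right hpos).mp hh),
        fun hh => this.2 ((div_le_div_iff_of_pos_right hpos).mp hh)⟩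
    refine ⟨fun j x => τ j x / (2*m : ℝ), ?_, ?_, ?_⟩
    · intro j x hx
      exact ⟨div_nonneg (hτnn j x hx) (le_of_lt hpos),
        (div_lt_one hpos).mpr (hτbd j x hx)⟩
    · intro j x hx y hy h
      apply hτinj j hx hy
      have := congrArg (fun w => w * (2*m : ℝ)) h
      simpa [div_mul_cancel₀, ne_of_gt hpos] using this
    · intro x hx y hy hxy
      obtain ⟨j, h | h⟩ := hτgood x hx y hy hxy
      · exact ⟨j, Or.inl (hscale j x y h)⟩
      · exact ⟨j, Or.inr (hscale j y x h)⟩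

theorem hst_ultrametric_cover_to_LSO
    (X : Type) [MetricSpace X] [Fintype X] (τ ρ k δ : ℝ)
    (hρ : 1 ≤ ρ) (hk : 1 ≤ k) (hδ : 1 ≤ δ)
    (hcover : IsHSTUltrametricCover X τ ρ k δ) :
    IsLSO (fun x y : X => dist x y) (τ * (⌈δ / 2⌉₊ : ℝ)) (ρ / k) := by
  classical
  obtain ⟨s, hs, D, hDu, hDdom, hDcov, hDhst, hDdeg⟩ := hcover
  set m : ℕ := ⌈δ / 2⌉₊ with hmdef
  have hm : 1 ≤ m := by
    have : (0:ℝ) < δ / 2 := by linarith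
    have := Nat.ceil_pos.mpr this
    omega
  have hδm : δ ≤ 2*(m:ℝ) := by
    have := Nat.le_ceil (δ / 2)
    rw [← hmdef] at this
    linarith
  have hk0 : (0:ℝ) < k := lt_of_lt_of_le one_pos hk
  -- orderings for each ultrametric
  have horders : ∀ i : Fin s, ∃ σ : Fin m → X → ℝ,
      (∀ j, ∀ x ∈ (Finset.univ : Finset X), 0 ≤ σ j x ∧ σ j x < 1) ∧
      (∀ j, Set.InjOn (σ j) ↑(Finset.univ : Finset X)) ∧
      (∀ x ∈ (Finset.univ : Finset X), ∀ y ∈ (Finset.univ : Finset X), x ≠ y →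
        ∃ j, GoodOn Finset.univ (D i) (σ j) x y ∨ GoodOn Finset.univ (D i) (σ j) y x) :=
    fun i => exists_orders (D i) (hDu i) δ (hDdeg i) m hm hδm
      (Fintype.card X) Finset.univ (le_of_eq (Finset.card_univ))
  choose σs hσs using horders
  -- conversion from GoodOn to LSOPair
  have conv : ∀ (i : Fin s) (σ0 : X → ℝ) (x y : X), D i x y ≤ ρ * dist x y →
      GoodOn Finset.univ (D i) σ0 x y →
      LSOPair (fun a b : X => dist a b) σ0 (ρ/k) x y := by
    intro i σ0 x y hle hG
    obtain ⟨hlt, t, ht⟩ := hG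
    refine ⟨hlt, t, fun z h1 h2 => ?_⟩
    have h := ht z (Finset.mem_univ z) h1 h2
    constructor
    · intro hzt
      have hduz : D i x z < D i x y := h.1 hzt
      have hzx : x ≠ z := fun e => by rw [e] at h1; exact lt_irrefl _ h1
      have hpos : 0 < D i x z := (hDu i).2.1 x z hzx
      have hkk : k * D i x z ≤ D i x y := hDhst i x z y hpos hduz
      have hd : dist x z ≤ D i x z := hDdom i x z
      calc dist x z ≤ D i x y / k := by
            rw [le_div_iff₀ hk0]
            calc dist x z * k ≤ D i x z * k := by nlinarith
              _ = k * D i x z := by ring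
              _ ≤ D i x y := hkk
        _ ≤ (ρ * dist x y) / k := by gcongr
        _ = ρ / k * dist x y := by ring
    · intro hzt
      have hduz : D i y z < D i x y := h.2 hzt
      have hzy : y ≠ z := fun e => by rw [e] at h2; exact lt_irrefl _ h2
      have hpos : 0 < D i y z := (hDu i).2.1 y z hzy
      have hsym : D i y x = D i x y := (hDu i).2.2.1 y x
      have hkk : k * D i y z ≤ D i x y := by
        rw [← hsym]
        exact hDhst i y z x hpos (by rwa [hsym])
      have hd : dist y z ≤ D i y z := hDdom i y z
      calc dist y z ≤ D i x y / k := by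
            rw [le_div_iff₀ hk0]
            calc dist y z * k ≤ D i y z * k := by nlinarith
              _ = k * D i y z := by ring
              _ ≤ D i x y := hkk
        _ ≤ (ρ * dist x y) / k := by gcongr
        _ = ρ / k * dist x y := by ring
  refine ⟨s * m, ?_, fun i => σs (finProdFinEquiv.symm i).1 (finProdFinEquiv.symm i).2,
    ?_, ?_⟩
  · push_cast
    exact mul_le_mul_of_nonneg_right hs (Nat.cast_nonneg m)
  · intro i
    intro a b hab
    exact (hσs _ ).2.1 _ (by simp) (by simp) hab
  · intro x y hxy
    obtain ⟨i, hi⟩ := hDcov x y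
    obtain ⟨j, h | h⟩ := (hσs i).2.2 x (Finset.mem_univ x) y (Finset.mem_univ y) hxy
    · refine ⟨finProdFinEquiv (i, j), Or.inl ?_⟩
      simp only [Equiv.symm_apply_apply]
      exact conv i (σs i j) x y hi h
    · refine ⟨finProdFinEquiv (i, j), Or.inr ?_⟩
      simp only [Equiv.symm_apply_apply]
      have hi' : D i y x ≤ ρ * dist y x := by
        rw [(hDu i).2.2.1 y x, dist_comm]
        exact hi
      exact conv i (σs i j) y x hi' h
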